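/- Let R be a commutative ring whose total quotient ring Q(R) is zero-dimensional, and let P be a prime ideal of R. Then the total quotient ring of the localization R_P equals the localization of Q(R) at the image of R \ P; in particular, if Q(R) is a perfect ring, then Q(R_P) is perfect. -/

import Mathlib

abbrev TotalQuotient (S : Type*) [CommRing S] := Localization (nonZeroDivisors S)

def IsZeroDimensional (S : Type*) [CommRing S] : Prop :=
  ∀ P : Ideal S, P.IsPrime → P.IsMaximal

/-- The descending chain condition on principal ideals (characterizing
commutative perfect rings). -/
def DCCPrincipal (R : Type*) [CommRing R] : Prop :=
  ∀ a : ℕ → R, (∀ m, Ideal.span {a (m + 1)} ≤ Ideal.span {a m}) →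
    ∃ N, ∀ m, N ≤ m → Ideal.span {a m} = Ideal.span {a N}

/-- DCC on principal ideals passes to surjective images. -/
lemma dcc_of_surjective {A B : Type*} [CommRing A] [CommRing B] (f : A →+* B)
    (hf : Function.Surjective f) (h : DCCPrincipal A) : DCCPrincipal B := by
  intro a hchain
  have hdvd : ∀ m, a m ∣ a (m + 1) := fun m =>
    Ideal.span_singleton_le_span_singleton.mp (hchain m)
  choose c hc using hdvd
  let b : ℕ → A := fun m => Nat.rec (hf (a 0)).choose
    (fun m bm => bm * (hf (c m)).choose) m
  have hb : ∀ m, f (b m) = a m := by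
    intro m
    induction m with
    | zero => exact (hf (a 0)).choose_spec
    | succ m ih =>
      show f (b m * (hf (c m)).choose) = a (m + 1)
      rw [map_mul, ih, (hf (c m)).choose_spec, ← hc m]
  have hbchain : ∀ m, Ideal.span {b (m + 1)} ≤ Ideal.span {b m} := by
    intro m
    exact Ideal.span_singleton_le_span_singleton.mpr ⟨(hf (c m)).choose, rfl⟩
  obtain ⟨N, hN⟩ := h b hbchain
  refine ⟨N, fun m hm => ?_⟩
  have h1 : b N ∣ b m := Ideal.span_singleton_le_span_singleton.mp (hN m hm).le
  have h2 : b m ∣ b N := Ideal.span_singleton_le_span_singleton.mp (hN m hm).ge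
  apply le_antisymm
  · exact Ideal.span_singleton_le_span_singleton.mpr (by simpa [hb] using map_dvd f h1)
  · exact Ideal.span_singleton_le_span_singleton.mpr (by simpa [hb] using map_dvd f h2)

/-- Zero-dimensional commutative rings are strongly π-regular. -/
lemma pi_regular {Q : Type*} [CommRing Q] (hz : IsZeroDimensional Q) (a : Q) :
    ∃ (n : ℕ) (b : Q), a ^ (n + 1) = a ^ (n + 2) * b := by
  set S : Submonoid Q :=
    { carrier := {y | ∃ (n : ℕ) (x : Q), y = a ^ n * (1 - a * x)}
      one_mem' := ⟨0, 0, by ring⟩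
      mul_mem' := by
        rintro u v ⟨n, x, rfl⟩ ⟨m, y, rfl⟩
        exact ⟨n + m, x + y - a * x * y, by ring⟩ } with hS
  by_cases h0 : (0 : Q) ∈ S
  · obtain ⟨n, x, hx⟩ := h0
    refine ⟨n, x, ?_⟩
    have : a ^ n = a ^ (n + 1) * x := by
      have := hx.symm
      rw [mul_sub, mul_one, sub_eq_zero] at this
      rw [this]; ring
    calc a ^ (n + 1) = a * a ^ n := by ring
      _ = a * (a ^ (n + 1) * x) := by rw [← this]
      _ = a ^ (n + 2) * x := by ring
  · exfalso
    have hnt : Nontrivial (Localization S) := by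
      by_contra hs
      rw [not_nontrivial_iff_subsingleton] at hs
      have : algebraMap Q (Localization S) 1 = algebraMap Q (Localization S) 0 :=
        Subsingleton.elim _ _
      obtain ⟨c, hc⟩ := (IsLocalization.eq_iff_exists S _).mp this
      simp only [mul_one, mul_zero] at hc
      exact h0 (hc ▸ c.2)
    obtain ⟨m, hm⟩ := Ideal.exists_maximal (Localization S)
    set p := m.comap (algebraMap Q (Localization S)) with hp
    have hprime : p.IsPrime := Ideal.comap_isPrime _ _
    have hdisj : ∀ s ∈ S, s ∉ p := by
      intro s hs hsp
      exact hm.ne_top (m.eq_top_of_isUnit_mem hsp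
        (IsLocalization.map_units (Localization S) ⟨s, hs⟩))
    have haS : a ∈ S := ⟨1, 0, by ring⟩
    have hap : a ∉ p := hdisj a haS
    obtain ⟨y, i, hip, hyi⟩ := (hz p hprime).exists_inv hap
    have : (1 : Q) - a * y ∈ p := by
      have : (1 : Q) - a * y = i := by linear_combination -hyi
      rw [this]; exact hip
    exact hdisj _ ⟨0, y, by ring⟩ this

/-- A key consequence of strong π-regularity. -/
lemma pow_kill {Q : Type*} [CommRing Q] (hz : IsZeroDimensional Q) (a : Q) :
    ∃ (n : ℕ) (b : Q), a ^ (n + 1) * (1 - a ^ (n + 1) * b ^ (n + 1)) = 0 := by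
  obtain ⟨n, b, h⟩ := pi_regular hz a
  refine ⟨n, b, ?_⟩
  have hk : ∀ k, a ^ (n + 1) = a ^ (n + 1 + k) * b ^ k := by
    intro k
    induction k with
    | zero => simp
    | succ k ih =>
      calc a ^ (n + 1) = a ^ (n + 1 + k) * b ^ k := ih
        _ = a ^ k * a ^ (n + 1) * b ^ k := by ring
        _ = a ^ k * (a ^ (n + 2) * b) * b ^ k := by rw [h]
        _ = a ^ (n + 1 + (k + 1)) * b ^ (k + 1) := by ring
  have hkk := hk (n + 1)
  calc a ^ (n + 1) * (1 - a ^ (n + 1) * b ^ (n + 1))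
      = a ^ (n + 1) - a ^ (n + 1 + (n + 1)) * b ^ (n + 1) := by ring
    _ = 0 := by rw [← hkk, sub_self]

lemma psi_one {Q T : Type*} [CommRing Q] [CommRing T] (ψ : Q →+* T) {u e : Q}
    (hu : IsUnit (ψ u)) (h : u * (1 - e) = 0) : ψ e = 1 := by
  have h1 : ψ u * ψ (1 - e) = 0 := by rw [← map_mul, h, map_zero]
  have h2 : ψ (1 - e) = 0 := (hu.mul_right_eq_zero).mp h1
  rw [map_sub, map_one, sub_eq_zero] at h2
  exact h2.symm

theorem stmt_18 {R : Type*} [CommRing R]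
    (hzero : IsZeroDimensional (TotalQuotient R))
    (P : Ideal R) (hP : P.IsPrime) :
    Nonempty (TotalQuotient (Localization.AtPrime P) ≃+*
      Localization (Submonoid.map (algebraMap R (TotalQuotient R)).toMonoidHom
        P.primeCompl)) ∧
    (DCCPrincipal (TotalQuotient R) →
      DCCPrincipal (TotalQuotient (Localization.AtPrime P))) := by
  classical
  set Q := TotalQuotient R with hQ
  set Rp := Localization.AtPrime P with hRp
  set S' : Submonoid Q := Submonoid.map (algebraMap R Q).toMonoidHom P.primeCompl with hS'
  set T := Localization S' with hT
  let fQ : R →+* Q := algebraMap R Q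
  let fp : R →+* Rp := algebraMap R Rp
  let ψ : Q →+* T := algebraMap Q T
  have hinj : Function.Injective fQ := IsFractionRing.injective R Q
  have hψunit : ∀ t : R, t ∈ P.primeCompl → IsUnit (ψ (fQ t)) := by
    intro t ht
    exact IsLocalization.map_units T
      (⟨fQ t, Submonoid.mem_map.mpr ⟨t, ht, rfl⟩⟩ : S')
  -- the canonical map Rp →+* T
  let g : Rp →+* T := IsLocalization.lift (M := P.primeCompl) (S := Rp)
    (g := ψ.comp fQ) (fun y => hψunit y y.2)
  have hgfp : ∀ r : R, g (fp r) = ψ (fQ r) := fun r =>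
    IsLocalization.lift_eq (fun y : P.primeCompl => hψunit y y.2) r
  -- nonzerodivisors of R map to nonzerodivisors of Rp
  have hd : ∀ d ∈ nonZeroDivisors R, fp d ∈ nonZeroDivisors Rp := by
    intro d hdR
    rw [mem_nonZeroDivisors_iff_right]
    intro z hz
    obtain ⟨⟨r, s⟩, hrs⟩ := IsLocalization.surj P.primeCompl z
    have hrd : fp (r * d) = fp 0 := by
      rw [map_zero, map_mul, ← hrs]
      calc z * fp ↑s * fp d = z * fp d * fp ↑s := by ring
        _ = 0 := by rw [hz, zero_mul]
    obtain ⟨t, ht⟩ := (IsLocalization.eq_iff_exists P.primeCompl Rp).mp hrd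
    rw [mul_zero, ← mul_assoc] at ht
    have htr : (↑t : R) * r = 0 := (mem_nonZeroDivisors_iff_right.mp hdR) _ ht
    have hfr : fp r = 0 := by
      have : fp ↑t * fp r = 0 := by rw [← map_mul, htr, map_zero]
      exact ((IsLocalization.map_units Rp t).mul_right_eq_zero).mp this
    have : z * fp ↑s = 0 := by rw [hrs, hfr]
    exact ((IsLocalization.map_units Rp s).mul_left_eq_zero).mp this
  -- key: nonzerodivisors of Rp coming from R become units in T
  have keyunit : ∀ x : R, fp x ∈ nonZeroDivisors Rp → IsUnit (ψ (fQ x)) := by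
    intro x hx
    obtain ⟨n, b, hnb⟩ := pow_kill hzero (fQ x)
    set a : Q := fQ x with ha
    set e : Q := a ^ (n + 1) * b ^ (n + 1) with he
    obtain ⟨⟨w, d⟩, hwd⟩ := IsLocalization.surj (nonZeroDivisors R) ((1 : Q) - e)
    have h1 : a ^ (n + 1) * fQ w = 0 := by
      rw [← hwd]
      calc a ^ (n + 1) * ((1 - e) * fQ ↑d) = a ^ (n + 1) * (1 - e) * fQ ↑d := by ring
        _ = 0 := by rw [hnb, zero_mul]
    have h3 : x ^ (n + 1) * w = 0 := by
      apply hinj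
      rw [map_zero, map_mul, map_pow]
      exact h1
    have h4 : fp w = 0 := by
      have h5 : (fp x) ^ (n + 1) * fp w = 0 := by
        rw [← map_pow, ← map_mul, h3, map_zero]
      exact mem_nonZeroDivisors_iff_right.mp (pow_mem hx (n + 1)) _
        (by rw [mul_comm]; exact h5)
    obtain ⟨t, ht⟩ := (IsLocalization.eq_iff_exists P.primeCompl Rp).mp
      (by rw [h4, map_zero] : fp w = fp 0)
    rw [mul_zero] at ht
    have h6 : fQ ↑t * (1 - e) * fQ ↑d = 0 := by
      rw [mul_assoc, hwd, ← map_mul, ht, map_zero]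
    have h7 : fQ ↑t * (1 - e) = 0 :=
      ((IsLocalization.map_units Q d).mul_left_eq_zero).mp h6
    have h8 : ψ e = 1 := psi_one ψ (hψunit ↑t t.2) h7
    have h9 : ψ a * ψ (a ^ n * b ^ (n + 1)) = 1 := by
      rw [← map_mul, show a * (a ^ n * b ^ (n + 1)) = e by rw [he]; ring, h8]
    exact IsUnit.of_mul_eq_one _ h9
  -- the IsLocalization instance
  letI : Algebra Rp T := g.toAlgebra
  have halg : algebraMap Rp T = g := rfl
  haveI hloc : IsLocalization (nonZeroDivisors Rp) T := by
    refine ⟨⟨?_, ?_, ?_⟩⟩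
    · -- map_units'
      rintro ⟨q, hq⟩
      obtain ⟨⟨x, s⟩, hxs⟩ := IsLocalization.surj P.primeCompl q
      have hxnzd : fp x ∈ nonZeroDivisors Rp := by
        rw [← hxs]
        exact mul_mem hq (IsLocalization.map_units Rp s).mem_nonZeroDivisors
      have hux : IsUnit (ψ (fQ x)) := keyunit x hxnzd
      have hprod : IsUnit (g q * g (fp ↑s)) := by
        rw [← map_mul, hxs, hgfp]; exact hux
      exact isUnit_of_mul_isUnit_left hprod
    · -- surj'
      intro z
      obtain ⟨⟨aq, s'⟩, h1⟩ := IsLocalization.surj S' z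
      obtain ⟨t, ht, hts⟩ := s'.2
      obtain ⟨⟨w, d⟩, h2⟩ := IsLocalization.surj (nonZeroDivisors R) aq
      refine ⟨⟨fp w, ⟨fp t * fp ↑d,
        mul_mem (IsLocalization.map_units Rp ⟨t, ht⟩).mem_nonZeroDivisors
          (hd ↑d d.2)⟩⟩, ?_⟩
      show z * g (fp t * fp ↑d) = g (fp w)
      rw [map_mul, hgfp, hgfp, hgfp]
      have hts' : fQ t = ↑s' := hts
      calc z * (ψ (fQ t) * ψ (fQ ↑d)) = z * ψ ↑s' * ψ (fQ ↑d) := by rw [hts']; ring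
        _ = ψ aq * ψ (fQ ↑d) := by rw [h1]
        _ = ψ (aq * fQ ↑d) := by rw [map_mul]
        _ = ψ (fQ w) := by rw [h2]
    · -- exists_of_eq
      intro x y hxy
      have hginj : Function.Injective g := by
        rw [injective_iff_map_eq_zero]
        intro z hz
        obtain ⟨⟨r, s⟩, hrs⟩ := IsLocalization.surj P.primeCompl z
        have : g (fp r) = 0 := by rw [← hrs, map_mul, hz, zero_mul]
        rw [hgfp] at this
        obtain ⟨c, hc⟩ := (IsLocalization.eq_iff_exists S' T).mp
          (by simp [this] : ψ (fQ r) = ψ (fQ 0))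
        obtain ⟨t, ht, htc⟩ := c.2
        rw [map_zero, mul_zero] at hc
        have htc' : fQ t = ↑c := htc
        have : fQ (t * r) = fQ 0 := by
          rw [map_zero, map_mul, htc', hc]
        have htr : t * r = 0 := hinj this
        have hfr : fp r = 0 := by
          have : fp t * fp r = 0 := by rw [← map_mul, htr, map_zero]
          exact ((IsLocalization.map_units Rp ⟨t, ht⟩).mul_right_eq_zero).mp this
        have : z * fp ↑s = 0 := by rw [hrs, hfr]
        exact ((IsLocalization.map_units Rp s).mul_left_eq_zero).mp this
      exact ⟨1, by rw [OneMemClass.coe_one, one_mul, one_mul]; exact hginj hxy⟩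
  -- the equivalence
  have equiv : TotalQuotient Rp ≃+* T :=
    (IsLocalization.algEquiv (nonZeroDivisors Rp) (TotalQuotient Rp) T).toRingEquiv
  refine ⟨⟨equiv⟩, ?_⟩
  -- DCC part
  intro hdcc
  have hψsurj : Function.Surjective ψ := by
    intro z
    obtain ⟨⟨aq, s'⟩, h1⟩ := IsLocalization.surj S' z
    have hu : IsUnit (ψ ↑s') := IsLocalization.map_units T s'
    obtain ⟨n, b, hnb⟩ := pow_kill hzero (↑s' : Q)
    have h8 : ψ ((↑s' : Q) ^ (n + 1) * b ^ (n + 1)) = 1 :=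
      psi_one ψ (u := (↑s' : Q) ^ (n + 1))
        (by rw [map_pow]; exact hu.pow (n + 1)) hnb
    refine ⟨aq * ((↑s' : Q) ^ n * b ^ (n + 1)), ?_⟩
    calc ψ (aq * ((↑s' : Q) ^ n * b ^ (n + 1)))
        = (z * ψ ↑s') * ψ ((↑s' : Q) ^ n * b ^ (n + 1)) := by rw [h1, map_mul]
      _ = z * ψ ((↑s' : Q) ^ (n + 1) * b ^ (n + 1)) := by
          simp only [map_mul, map_pow]
          ring
      _ = z := by rw [h8, mul_one]
  have hT : DCCPrincipal T := dcc_of_surjective ψ hψsurj hdcc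
  exact dcc_of_surjective (equiv.symm : T →+* TotalQuotient Rp)
    equiv.symm.surjective hT
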